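/- For (b,c,d,f,g,i) ∈ ℂ⁶ and q = q(b,c,d,f,g,i): if b = 0, c = 0, f ≠ 0 and f² + ig − d = 0, then dim 𝓩_q = 4. -/
import Mathlib


open Matrix

noncomputable section

/-- The Lie algebra 𝔤 ≅ sp₄(ℂ), realized as the space of 4×4 complex matrices
with rows (A,B,C,D), (E,F,G,C), (H,I,−F,−B), (J,H,−E,−A). -/
def sp4 : Submodule ℂ (Matrix (Fin 4) (Fin 4) ℂ) where
  carrier := {M | M 1 3 = M 0 2 ∧ M 2 2 = -M 1 1 ∧ M 2 3 = -M 0 1 ∧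
    M 3 1 = M 2 0 ∧ M 3 2 = -M 1 0 ∧ M 3 3 = -M 0 0}
  add_mem' := by
    rintro a b ⟨h1, h2, h3, h4, h5, h6⟩ ⟨k1, k2, k3, k4, k5, k6⟩
    simp only [Set.mem_setOf_eq, Matrix.add_apply, h1, h2, h3, h4, h5, h6,
      k1, k2, k3, k4, k5, k6]
    refine ⟨?_, ?_, ?_, ?_, ?_, ?_⟩ <;> first | trivial | ring
  zero_mem' := by
    simp [Set.mem_setOf_eq]
  smul_mem' := by
    rintro c a ⟨h1, h2, h3, h4, h5, h6⟩
    simp only [Set.mem_setOf_eq, Matrix.smul_apply, h1, h2, h3, h4, h5, h6, smul_eq_mul]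
    refine ⟨?_, ?_, ?_, ?_, ?_, ?_⟩ <;> first | trivial | ring

/-- Matrices commuting with a given matrix `q`. -/
def commWith (q : Matrix (Fin 4) (Fin 4) ℂ) : Submodule ℂ (Matrix (Fin 4) (Fin 4) ℂ) where
  carrier := {z | z * q = q * z}
  add_mem' := by
    intro a b ha hb
    simp only [Set.mem_setOf_eq] at *
    rw [add_mul, mul_add, ha, hb]
  zero_mem' := by simp
  smul_mem' := by
    intro c a ha
    simp only [Set.mem_setOf_eq] at *
    rw [smul_mul_assoc, mul_smul_comm, ha]

/-- The centralizer 𝓩_q = {z ∈ 𝔤 : zq = qz}, a ℂ-subspace of 𝔤. -/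
def cent (q : Matrix (Fin 4) (Fin 4) ℂ) : Submodule ℂ (Matrix (Fin 4) (Fin 4) ℂ) :=
  sp4 ⊓ commWith q

/-- The element q(b,c,d,f,g,i) of the Slodowy slice. -/
def qmat (b c d f g i : ℂ) : Matrix (Fin 4) (Fin 4) ℂ :=
  !![0, b, c, d; 0, f, g, c; 0, i, -f, -b; 1, 0, 0, 0]


/-- Basis element corresponding to parameter E. -/
def ME (f g i : ℂ) : Matrix (Fin 4) (Fin 4) ℂ :=
  !![0, -i, f, 0; 1, 0, 0, f; 0, 0, 0, i; 0, 0, -1, 0]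

/-- Basis element corresponding to parameter F. -/
def MF (f g i : ℂ) : Matrix (Fin 4) (Fin 4) ℂ :=
  !![0, 0, 0, 0; 0, 1, g/f, 0; 0, i/f, -1, 0; 0, 0, 0, 0]

/-- Basis element corresponding to parameter H. -/
def MH (f g i : ℂ) : Matrix (Fin 4) (Fin 4) ℂ :=
  !![0, f, g, 0; 0, 0, 0, g; 1, 0, 0, -f; 0, 1, 0, 0]

/-- Basis element corresponding to parameter J. -/
def MJ (f g i : ℂ) : Matrix (Fin 4) (Fin 4) ℂ :=
  !![0, 0, 0, f^2 + i*g; 0, 0, 0, 0; 0, 0, 0, 0; 1, 0, 0, 0]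

lemma ME_mem (f g i : ℂ) (hf : f ≠ 0) : ME f g i ∈ cent (qmat 0 0 (f^2+i*g) f g i) := by
  constructor
  · refine ⟨?_, ?_, ?_, ?_, ?_, ?_⟩ <;> simp [ME, sp4, Matrix.vecHead, Matrix.vecTail, Function.comp]
  · show _ * _ = _ * _
    ext a b
    fin_cases a <;> fin_cases b <;>
      simp [ME, qmat, Matrix.mul_apply, Fin.sum_univ_four, Matrix.vecHead, Matrix.vecTail] <;> ring

lemma MF_mem (f g i : ℂ) (hf : f ≠ 0) : MF f g i ∈ cent (qmat 0 0 (f^2+i*g) f g i) := by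
  constructor
  · refine ⟨?_, ?_, ?_, ?_, ?_, ?_⟩ <;> simp [MF, sp4, Matrix.vecHead, Matrix.vecTail, Function.comp]
  · show _ * _ = _ * _
    ext a b
    fin_cases a <;> fin_cases b <;>
      simp [MF, qmat, Matrix.mul_apply, Fin.sum_univ_four, Matrix.vecHead, Matrix.vecTail] <;> field_simp <;> ring

lemma MH_mem (f g i : ℂ) (hf : f ≠ 0) : MH f g i ∈ cent (qmat 0 0 (f^2+i*g) f g i) := by
  constructor
  · refine ⟨?_, ?_, ?_, ?_, ?_, ?_⟩ <;> simp [MH, sp4, Matrix.vecHead, Matrix.vecTail, Function.comp]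
  · show _ * _ = _ * _
    ext a b
    fin_cases a <;> fin_cases b <;>
      simp [MH, qmat, Matrix.mul_apply, Fin.sum_univ_four, Matrix.vecHead, Matrix.vecTail] <;> ring

lemma MJ_mem (f g i : ℂ) (hf : f ≠ 0) : MJ f g i ∈ cent (qmat 0 0 (f^2+i*g) f g i) := by
  constructor
  · refine ⟨?_, ?_, ?_, ?_, ?_, ?_⟩ <;> simp [MJ, sp4, Matrix.vecHead, Matrix.vecTail, Function.comp]
  · show _ * _ = _ * _
    ext a b
    fin_cases a <;> fin_cases b <;>
      simp [MJ, qmat, Matrix.mul_apply, Fin.sum_univ_four, Matrix.vecHead, Matrix.vecTail] <;> ring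

set_option maxHeartbeats 1000000 in
lemma cent_entries (f g i : ℂ) (hf : f ≠ 0) (z : Matrix (Fin 4) (Fin 4) ℂ)
    (hz : z ∈ cent (qmat 0 0 (f^2+i*g) f g i)) :
    z = z 1 0 • ME f g i + z 1 1 • MF f g i + z 2 0 • MH f g i + z 3 0 • MJ f g i := by
  obtain ⟨⟨h1, h2, h3, h4, h5, h6⟩, hcm⟩ := hz
  have hqz : ∀ a b : Fin 4, (z * qmat 0 0 (f^2+i*g) f g i) a b
      = (qmat 0 0 (f^2+i*g) f g i * z) a b := fun a b => by
    rw [hcm]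
  have e30 := hqz 3 0
  have e31 := hqz 3 1
  have e32 := hqz 3 2
  have e33 := hqz 3 3
  have e12 := hqz 1 2
  have e21 := hqz 2 1
  simp [qmat, Matrix.mul_apply, Fin.sum_univ_four, Matrix.vecHead, Matrix.vecTail] at e30 e31 e32 e33 e12 e21
  have hA : z 0 0 = 0 := by linear_combination (h6 - e30)/2
  have hB : z 0 1 = f * z 2 0 - i * z 1 0 := by
    rw [h4, h5] at e31; linear_combination -e31
  have hC : z 0 2 = g * z 2 0 + f * z 1 0 := by
    rw [h4, h5] at e32; linear_combination -e32
  have hD : z 0 3 = (f^2 + i*g) * z 3 0 := by linear_combination -e33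
  have hG : z 1 2 = g * z 1 1 / f := by
    rw [h2] at e12
    field_simp
    linear_combination -e12/2
  have hI : z 2 1 = i * z 1 1 / f := by
    rw [h2] at e21
    field_simp
    linear_combination e21/2
  clear hcm hqz e30 e31 e32 e33 e12 e21
  ext a b
  fin_cases a <;> fin_cases b <;>
    simp [ME, MF, MH, MJ, Matrix.vecHead, Matrix.vecTail, Function.comp,
      hA, hB, hC, hD, hG, hI, h1, h2, h3, h4, h5, h6]
  all_goals first | ring | (field_simp; ring)

theorem slice_dim_f_ne (b c d f g i : ℂ)
    (hb : b = 0) (hc : c = 0) (hf : f ≠ 0) (hx : f ^ 2 + i * g - d = 0) :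
    Module.finrank ℂ (cent (qmat b c d f g i)) = 4 := by
  subst hb hc
  have hd : d = f ^ 2 + i * g := by linear_combination -hx
  subst hd
  let π : cent (qmat 0 0 (f^2+i*g) f g i) →ₗ[ℂ] (Fin 4 → ℂ) :=
    { toFun := fun z => ![z.1 1 0, z.1 1 1, z.1 2 0, z.1 3 0]
      map_add' := by intro a b; ext j; fin_cases j <;> simp
      map_smul' := by intro c a; ext j; fin_cases j <;> simp }
  have hbij : Function.Bijective π := by
    constructor
    · intro x y hxy
      have h0 := congrFun hxy 0
      have h1 := congrFun hxy 1
      have h2 := congrFun hxy 2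
      have h3 := congrFun hxy 3
      simp [π] at h0 h1 h2 h3
      ext1
      rw [cent_entries f g i hf x.1 x.2, cent_entries f g i hf y.1 y.2,
        h0, h1, h2, h3]
    · intro v
      have hmem : v 0 • ME f g i + v 1 • MF f g i + v 2 • MH f g i + v 3 • MJ f g i
          ∈ cent (qmat 0 0 (f^2+i*g) f g i) := by
        exact Submodule.add_mem _ (Submodule.add_mem _ (Submodule.add_mem _
          (Submodule.smul_mem _ _ (ME_mem f g i hf))
          (Submodule.smul_mem _ _ (MF_mem f g i hf)))
          (Submodule.smul_mem _ _ (MH_mem f g i hf)))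
          (Submodule.smul_mem _ _ (MJ_mem f g i hf))
      refine ⟨⟨_, hmem⟩, ?_⟩
      ext j
      fin_cases j <;> simp [π, ME, MF, MH, MJ]
  have := (LinearEquiv.ofBijective π hbij).finrank_eq
  rw [this]
  simp

end
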